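/- Let X be a vector lattice having a countable order basis and the countable sup property. Then uo-convergence on X is sequential: whenever (x_α)_{α∈A} is a net in X that uo-converges to 0, there exists an increasing sequence of indices α_n ∈ A such that the sequence (x_{α_n}) uo-converges to 0. -/

import Mathlib

open Filter Set Topology

variable {X : Type*} [Lattice X] [AddCommGroup X] [Module ℝ X]
  [CovariantClass X X (· + ·) (· ≤ ·)] [PosSMulMono ℝ X]

/-- The Archimedean property for a lattice-ordered group. -/
def VLArchimedean (X : Type*) [Lattice X] [AddCommGroup X] : Prop :=
  ∀ x y : X, 0 ≤ x → (∀ n : ℕ, n • x ≤ y) → x = 0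

/-- A set is solid if `x ∈ S` and `|y| ≤ |x|` imply `y ∈ S`. -/
def IsSolid (S : Set X) : Prop := ∀ ⦃x y : X⦄, x ∈ S → |y| ≤ |x| → y ∈ S

/-- A locally solid (linear) topology on a vector lattice. -/
def IsLocallySolidTop (τ : TopologicalSpace X) : Prop :=
  @IsTopologicalAddGroup X τ _ ∧ @ContinuousSMul ℝ X _ _ τ ∧
    ∀ U ∈ @nhds X τ 0, ∃ V ∈ @nhds X τ 0, IsSolid V ∧ V ⊆ U

/-- An order ideal: a solid linear subspace. -/
def IsOrderIdeal (A : Set X) : Prop :=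
  0 ∈ A ∧ (∀ x ∈ A, ∀ y ∈ A, x + y ∈ A) ∧ (∀ (c : ℝ), ∀ x ∈ A, c • x ∈ A) ∧ IsSolid A

/-- The order ideal generated by a set. -/
def idealGenerated (A : Set X) : Set X := ⋂₀ {I | IsOrderIdeal I ∧ A ⊆ I}

/-- A band: an order ideal closed under existing suprema. -/
def IsBand (B : Set X) : Prop :=
  IsOrderIdeal B ∧ ∀ D ⊆ B, ∀ x : X, IsLUB D x → x ∈ B

/-- The band generated by a set. -/
def bandGenerated (A : Set X) : Set X := ⋂₀ {B | IsBand B ∧ A ⊆ B}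

/-- `A` is a countable order basis: `A` is at most countable and generates `X` as a band. -/
def CountableOrderBasis (A : Set X) : Prop := A.Countable ∧ bandGenerated A = Set.univ

/-- The neighbourhood filter of zero of the unbounded topology `u_A τ`:
generated by the sets `{x : |x| ⊓ a ∈ U}` for `U` a `τ`-neighbourhood of zero, `a ∈ A₊`. -/
def unbNhdsZero (τ : TopologicalSpace X) (A : Set X) : Filter X :=
  ⨅ a ∈ {a ∈ A | 0 ≤ a}, Filter.comap (fun x => |x| ⊓ a) (@nhds X τ 0)

/-- The unbounded topology `u_A τ` induced by the ideal `A`; `u τ = unbTopology τ Set.univ`. -/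
def unbTopology (τ : TopologicalSpace X) (A : Set X) : TopologicalSpace X :=
  TopologicalSpace.mkOfNhds fun x => Filter.map (x + ·) (unbNhdsZero τ A)

/-- A sublattice/ideal is order dense if every nonzero positive vector dominates a
nonzero positive vector of it. -/
def OrderDense (A : Set X) : Prop := ∀ x : X, 0 < x → ∃ y ∈ A, 0 < y ∧ y ≤ x

/-- A minimal topology: a Hausdorff locally solid topology with no strictly coarser
Hausdorff locally solid topology. (In Mathlib's order on `TopologicalSpace`,
`τ ≤ σ` means `τ` is finer than `σ`.) -/
def IsMinimalTop (τ : TopologicalSpace X) : Prop :=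
  IsLocallySolidTop τ ∧ @T2Space X τ ∧
    ∀ σ : TopologicalSpace X, IsLocallySolidTop σ → @T2Space X σ → τ ≤ σ → σ = τ

/-- The countable sup property. -/
def CountableSupProperty (Y : Type*) [Lattice Y] : Prop :=
  ∀ S : Set Y, ∀ x : Y, S.Nonempty → IsLUB S x → ∃ C ⊆ S, C.Countable ∧ IsLUB C x

/-- Order convergence to zero of a net: there is a downward directed set `D` with
infimum `0`, each member of which eventually dominates `|x α|`. -/
def OrderNull {ι : Type*} [Preorder ι] (x : ι → X) : Prop :=
  ∃ D : Set X, D.Nonempty ∧ (∀ a ∈ D, ∀ b ∈ D, ∃ c ∈ D, c ≤ a ∧ c ≤ b) ∧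
    IsGLB D 0 ∧ ∀ d ∈ D, ∃ α₀ : ι, ∀ α, α₀ ≤ α → |x α| ≤ d

/-- Unbounded order (uo-) convergence to zero of a net. -/
def UoNull {ι : Type*} [Preorder ι] (x : ι → X) : Prop :=
  ∀ u : X, 0 ≤ u → OrderNull (fun α => |x α| ⊓ u)

/-- A set is topologically bounded if it is absorbed by every neighbourhood of zero. -/
def TopBounded (τ : TopologicalSpace X) (S : Set X) : Prop :=
  ∀ U ∈ @nhds X τ 0, ∃ l : ℝ, 0 < l ∧ ∀ x ∈ S, l • x ∈ U

/-- A locally bounded topology: it has a topologically bounded neighbourhood of zero. -/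
def LocallyBoundedTop (τ : TopologicalSpace X) : Prop :=
  ∃ V ∈ @nhds X τ 0, TopBounded τ V

/-- A submetrizable topology: finer than some metrizable linear topology.
(In Mathlib's order on `TopologicalSpace`, `τ ≤ σ` means `τ` is finer than `σ`.) -/
def Submetrizable (τ : TopologicalSpace X) : Prop :=
  ∃ σ : TopologicalSpace X, @IsTopologicalAddGroup X σ _ ∧ @ContinuousSMul ℝ X _ _ σ ∧
    @TopologicalSpace.MetrizableSpace X σ ∧ τ ≤ σ

/-- A Riesz submetrizable topology: finer than some metrizable locally solid topology. -/
def RieszSubmetrizable (τ : TopologicalSpace X) : Prop :=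
  ∃ σ : TopologicalSpace X, IsLocallySolidTop σ ∧ @TopologicalSpace.MetrizableSpace X σ ∧ τ ≤ σ

/-- Dedekind (order) completeness. -/
def DedekindComplete (Y : Type*) [Lattice Y] : Prop :=
  ∀ S : Set Y, S.Nonempty → BddAbove S → ∃ x, IsLUB S x

/-- Lateral completeness: every nonempty set of pairwise disjoint positive vectors
has a supremum. -/
def LaterallyComplete (Y : Type*) [Lattice Y] [AddCommGroup Y] : Prop :=
  ∀ S : Set Y, S.Nonempty → (∀ x ∈ S, 0 ≤ x) → (S.Pairwise fun a b => a ⊓ b = 0) →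
    ∃ x, IsLUB S x


set_option maxHeartbeats 1000000 in
section
set_option linter.unusedSectionVars false

lemma aux_inf_isLUB {S : Set X} {s a b : X} (h : IsLUB S s)
    (hb : ∀ y ∈ S, a ⊓ y ≤ b) : a ⊓ s ≤ b := by
  have key : ∀ y ∈ S, y ≤ b + s - a ⊓ s := by
    intro y hy
    have h1 : a ⊓ s - (s - y) ≤ a ⊓ y := by
      refine le_inf ?_ ?_
      · rw [sub_le_iff_le_add]
        exact inf_le_left.trans (le_add_of_nonneg_right (sub_nonneg.2 (h.1 hy)))
      · rw [sub_le_iff_le_add, add_sub_cancel]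
        exact inf_le_right
    have h2 : a ⊓ s - (s - y) ≤ b := h1.trans (hb y hy)
    have h3 : a ⊓ s ≤ b + s - y := by
      rw [sub_le_iff_le_add] at h2
      calc a ⊓ s ≤ b + (s - y) := h2
        _ = b + s - y := by abel
    exact le_sub_comm.1 h3
  have h5 : a ⊓ s ≤ b + s - s := le_sub_comm.1 (h.2 key)
  simpa using h5

lemma aux_smul_sup {t : ℝ} (ht : 0 ≤ t) (a b : X) : t • (a ⊔ b) = t • a ⊔ t • b := by
  rcases ht.eq_or_lt with rfl | ht
  · simp
  · refine le_antisymm ?_ (sup_le (smul_le_smul_of_nonneg_left le_sup_left ht.le)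
      (smul_le_smul_of_nonneg_left le_sup_right ht.le))
    have h : a ⊔ b ≤ t⁻¹ • (t • a ⊔ t • b) := by
      refine sup_le ?_ ?_
      · calc a = t⁻¹ • (t • a) := by rw [smul_smul, inv_mul_cancel₀ ht.ne', one_smul]
          _ ≤ t⁻¹ • (t • a ⊔ t • b) :=
            smul_le_smul_of_nonneg_left le_sup_left (inv_nonneg.2 ht.le)
      · calc b = t⁻¹ • (t • b) := by rw [smul_smul, inv_mul_cancel₀ ht.ne', one_smul]
          _ ≤ t⁻¹ • (t • a ⊔ t • b) :=
            smul_le_smul_of_nonneg_left le_sup_right (inv_nonneg.2 ht.le)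
    calc t • (a ⊔ b) ≤ t • (t⁻¹ • (t • a ⊔ t • b)) := smul_le_smul_of_nonneg_left h ht.le
      _ = t • a ⊔ t • b := by rw [smul_smul, mul_inv_cancel₀ ht.ne', one_smul]

lemma aux_abs_eq (a : X) : |a| = a ⊔ -a := rfl

lemma aux_abs_smul (t : ℝ) (x : X) : |t • x| = |t| • |x| := by
  rcases le_or_gt 0 t with ht | ht
  · rw [abs_of_nonneg ht, aux_abs_eq, aux_abs_eq, ← smul_neg, ← aux_smul_sup ht]
  · have h : t • x = (-t) • (-x) := by rw [neg_smul_neg]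
    rw [h, abs_of_neg ht, aux_abs_eq, aux_abs_eq, ← smul_neg,
      ← aux_smul_sup (by linarith : (0:ℝ) ≤ -t), neg_neg, sup_comm]

lemma basisLUB {A : Set X} (hA : CountableOrderBasis A) :
    ∃ g : ℕ → X, (∀ m, 0 ≤ g m) ∧ ∀ x : X, IsLUB (Set.range fun m => |x| ⊓ g m) |x| := by
  classical
  obtain ⟨f, hf⟩ : ∃ f : ℕ → X, insert (0:X) A = Set.range f :=
    (hA.1.insert 0).exists_eq_range (Set.insert_nonempty _ _)
  set c : ℕ → X := fun m => (Finset.range (m+1)).sup' Finset.nonempty_range_add_one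
    (fun k => |f k|) with hc
  have hfc : ∀ k m, k ≤ m → |f k| ≤ c m := fun k m h =>
    Finset.le_sup' (fun k => |f k|) (Finset.mem_range.2 (Nat.lt_succ_of_le h))
  have hc0 : ∀ m, 0 ≤ c m := fun m => (abs_nonneg (f 0)).trans (hfc 0 m (Nat.zero_le m))
  have hcmono : Monotone c := by
    intro m m' h
    exact Finset.sup'_mono _ (Finset.range_subset_range.2 (by omega)) _
  set g : ℕ → X := fun m => m • c m with hgdef
  have hg0 : ∀ m, 0 ≤ g m := fun m => nsmul_nonneg (hc0 m) m
  have hgadd : ∀ m m', g m + g m' ≤ g (m + m') := by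
    intro m m'
    calc m • c m + m' • c m' ≤ m • c (m+m') + m' • c (m+m') :=
          add_le_add (nsmul_le_nsmul_right (hcmono (by omega)) m)
            (nsmul_le_nsmul_right (hcmono (by omega)) m')
      _ = (m + m') • c (m+m') := (add_nsmul _ _ _).symm
  have hgsm : ∀ t : ℝ, 0 ≤ t → ∀ m, ∃ M, t • g m ≤ g M := by
    intro t ht m
    obtain ⟨n, hn⟩ := exists_nat_ge t
    refine ⟨(n+1) * m, ?_⟩
    have h1 : t • g m ≤ ((n+1:ℕ) : ℝ) • g m := by
      have h2 : (0:X) ≤ (((n+1:ℕ):ℝ) - t) • g m :=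
        smul_nonneg (by push_cast; linarith) (hg0 m)
      have h3 : (((n+1:ℕ):ℝ) - t) • g m = ((n+1:ℕ):ℝ) • g m - t • g m := sub_smul _ _ _
      rw [h3] at h2
      exact sub_nonneg.1 h2
    calc t • g m ≤ ((n+1:ℕ) : ℝ) • g m := h1
      _ = (n+1) • g m := Nat.cast_smul_eq_nsmul ℝ _ _
      _ = ((n+1) * m) • c m := by rw [hgdef]; rw [← mul_nsmul']
      _ ≤ ((n+1) * m) • c ((n+1) * m) :=
          nsmul_le_nsmul_right (hcmono (Nat.le_mul_of_pos_left m (by omega))) _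
      _ = g ((n+1) * m) := rfl
  set B : Set X := {x : X | IsLUB (Set.range fun m => |x| ⊓ g m) |x|} with hB
  have solidB : ∀ {P : X} {y : X}, IsLUB (Set.range fun m => P ⊓ g m) P → |y| ≤ P → y ∈ B := by
    intro P y hP hyP
    constructor
    · rintro _ ⟨m, rfl⟩; exact inf_le_left
    · intro b hb
      have h1 : |y| ⊓ P ≤ b := by
        refine aux_inf_isLUB hP ?_
        rintro _ ⟨m, rfl⟩
        exact (inf_le_inf_left _ inf_le_right).trans (hb ⟨m, rfl⟩)
      rwa [inf_eq_left.2 hyP] at h1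
  have zeroB : (0:X) ∈ B := by
    have hz : ∀ m, |(0:X)| ⊓ g m = 0 := fun m => by rw [abs_zero]; exact inf_eq_left.2 (hg0 m)
    constructor
    · rintro _ ⟨m, rfl⟩
      show |(0:X)| ⊓ g m ≤ |(0:X)|
      rw [hz, abs_zero]
    · intro b hb
      have h1 : |(0:X)| ⊓ g 0 ≤ b := hb ⟨0, rfl⟩
      rwa [hz, ← abs_zero (α := X)] at h1
  have posAddB : ∀ {P Q : X}, IsLUB (Set.range fun m => P ⊓ g m) P →
      IsLUB (Set.range fun m => Q ⊓ g m) Q →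
      IsLUB (Set.range fun m => (P + Q) ⊓ g m) (P + Q) := by
    intro P Q hP hQ
    constructor
    · rintro _ ⟨m, rfl⟩; exact inf_le_left
    · intro b hb
      have h1 : ∀ m, Q ⊓ g m ≤ b - P := by
        intro m
        have h2 : P ≤ b - Q ⊓ g m := by
          refine hP.2 ?_
          rintro _ ⟨m', rfl⟩
          rw [le_sub_iff_add_le]
          calc P ⊓ g m' + Q ⊓ g m ≤ (P + Q) ⊓ (g m' + g m) :=
                le_inf (add_le_add inf_le_left inf_le_left)
                  (add_le_add inf_le_right inf_le_right)
            _ ≤ (P + Q) ⊓ g (m' + m) := inf_le_inf_left _ (hgadd m' m)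
            _ ≤ b := hb ⟨m' + m, rfl⟩
        exact le_sub_comm.1 h2
      have h3 : Q ≤ b - P := hQ.2 (by rintro _ ⟨m, rfl⟩; exact h1 m)
      calc P + Q = Q + P := add_comm _ _
        _ ≤ b := le_sub_iff_add_le.1 h3
  have smulB : ∀ {P : X} {t : ℝ}, 0 < t → IsLUB (Set.range fun m => P ⊓ g m) P →
      IsLUB (Set.range fun m => (t • P) ⊓ g m) (t • P) := by
    intro P t ht hP
    constructor
    · rintro _ ⟨m, rfl⟩; exact inf_le_left
    · intro b hb
      have h1 : P ≤ t⁻¹ • b := by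
        refine hP.2 ?_
        rintro _ ⟨m, rfl⟩
        obtain ⟨M, hM⟩ := hgsm t ht.le m
        have h2 : t • (P ⊓ g m) ≤ b := by
          calc t • (P ⊓ g m) ≤ (t • P) ⊓ (t • g m) :=
                le_inf (smul_le_smul_of_nonneg_left inf_le_left ht.le)
                  (smul_le_smul_of_nonneg_left inf_le_right ht.le)
            _ ≤ (t • P) ⊓ g M := inf_le_inf_left _ hM
            _ ≤ b := hb ⟨M, rfl⟩
        calc P ⊓ g m = t⁻¹ • (t • (P ⊓ g m)) := by
              rw [smul_smul, inv_mul_cancel₀ ht.ne', one_smul]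
          _ ≤ t⁻¹ • b := smul_le_smul_of_nonneg_left h2 (inv_nonneg.2 ht.le)
      calc t • P ≤ t • (t⁻¹ • b) := smul_le_smul_of_nonneg_left h1 ht.le
        _ = b := by rw [smul_smul, mul_inv_cancel₀ ht.ne', one_smul]
  have addB : ∀ {x y : X}, x ∈ B → y ∈ B → x + y ∈ B := by
    intro x y hx hy
    exact solidB (posAddB hx hy) (abs_add_le x y)
  have smulcB : ∀ (t : ℝ) {x : X}, x ∈ B → t • x ∈ B := by
    intro t x hx
    rcases eq_or_ne t 0 with rfl | ht
    · rw [zero_smul]; exact zeroB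
    · exact solidB (smulB (abs_pos.2 ht) hx) (le_of_eq (aux_abs_smul t x))
  have hband : IsBand B := by
    refine ⟨⟨zeroB, fun x hx y hy => addB hx hy, fun t x hx => smulcB t hx,
      fun x y hx hyx => solidB hx hyx⟩, ?_⟩
    intro D hD s hs
    rcases D.eq_empty_or_nonempty with rfl | ⟨d₀, hd₀⟩
    · have hbot : ∀ y : X, s ≤ y := fun y => hs.2 (by rintro z ⟨⟩)
      have h0 : ∀ v : X, (0:X) ≤ v := fun v => (le_add_iff_nonneg_right s).1 (hbot (s + v))
      have : s = 0 := le_antisymm (hbot 0) (h0 s)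
      rw [this]; exact zeroB
    · have hd₀B : d₀ ∈ B := hD hd₀
      have habs_sup : ∀ a b : X, |a ⊔ b| ≤ |a| + |b| := by
        intro a b
        have h2 : |a ⊔ b| ≤ |a| ⊔ |b| := by
          rw [aux_abs_eq (a ⊔ b)]
          refine sup_le (sup_le ((le_abs_self a).trans le_sup_left)
            ((le_abs_self b).trans le_sup_right)) ?_
          rw [neg_sup]
          exact inf_le_left.trans ((neg_le_abs a).trans le_sup_left)
        exact h2.trans (sup_le (le_add_of_nonneg_right (abs_nonneg b))
          (le_add_of_nonneg_left (abs_nonneg a)))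
      have hsupsub : ∀ d ∈ D, d ⊔ d₀ - d₀ ∈ B := by
        intro d hd
        have h1 : d ⊔ d₀ ∈ B := solidB (posAddB (hD hd) hd₀B) (habs_sup d d₀)
        have h2 : -d₀ ∈ B := by
          have := smulcB (-1 : ℝ) hd₀B
          rwa [neg_smul, one_smul] at this
        rw [sub_eq_add_neg]
        exact addB h1 h2
      have ht0 : 0 ≤ s - d₀ := sub_nonneg.2 (hs.1 hd₀)
      have htB : s - d₀ ∈ B := by
        have habs : |s - d₀| = s - d₀ := abs_of_nonneg ht0
        constructor
        · rintro _ ⟨m, rfl⟩; exact inf_le_left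
        · intro b hb
          rw [habs]
          have hsb : s ≤ b + d₀ := by
            refine hs.2 ?_
            intro d hd
            set e := d ⊔ d₀ - d₀ with he
            have heB : e ∈ B := hsupsub d hd
            have he0 : 0 ≤ e := sub_nonneg.2 le_sup_right
            have heb : e ≤ b := by
              have heLUB : IsLUB (Set.range fun m => |e| ⊓ g m) |e| := heB
              rw [abs_of_nonneg he0] at heLUB
              refine heLUB.2 ?_
              rintro _ ⟨m, rfl⟩
              have h3 : e ⊓ g m ≤ (s - d₀) ⊓ g m :=
                inf_le_inf_right _ (sub_le_sub_right (sup_le (hs.1 hd) (hs.1 hd₀)) d₀)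
              have h4 : |s - d₀| ⊓ g m ≤ b := hb ⟨m, rfl⟩
              rw [habs] at h4
              exact h3.trans h4
            have : d ⊔ d₀ ≤ b + d₀ := by
              rw [he] at heb
              calc d ⊔ d₀ = (d ⊔ d₀ - d₀) + d₀ := by abel
                _ ≤ b + d₀ := add_le_add heb le_rfl
            exact le_sup_left.trans this
          exact sub_le_iff_le_add.2 hsb
      have : s = (s - d₀) + d₀ := by abel
      rw [this]
      exact addB htB hd₀B
  have hAB : A ⊆ B := by
    intro a ha
    have : a ∈ Set.range f := by rw [← hf]; exact Set.mem_insert_of_mem _ ha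
    obtain ⟨k, rfl⟩ := this
    constructor
    · rintro _ ⟨m, rfl⟩; exact inf_le_left
    · intro b hb
      have h1 : |f k| ≤ g (k+1) := by
        calc |f k| ≤ c (k+1) := hfc k (k+1) (by omega)
          _ = 1 • c (k+1) := (one_nsmul _).symm
          _ ≤ (k+1) • c (k+1) := nsmul_le_nsmul_left (hc0 (k+1)) (by omega)
      have h2 : |f k| ⊓ g (k+1) ≤ b := hb ⟨k+1, rfl⟩
      rwa [inf_eq_left.2 h1] at h2
  refine ⟨g, hg0, fun x => ?_⟩
  have hx : x ∈ bandGenerated A := by rw [hA.2]; trivial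
  exact hx B ⟨hband, hAB⟩

lemma seq_of_glb (hcsp : CountableSupProperty X) (hnt : ∃ v : X, v ≠ 0)
    {D : Set X} (hne : D.Nonempty) (hdir : ∀ a ∈ D, ∀ b ∈ D, ∃ c ∈ D, c ≤ a ∧ c ≤ b)
    (hglb : IsGLB D 0) :
    ∃ e : ℕ → X, (∀ j, e j ∈ D) ∧ Antitone e ∧ IsGLB (Set.range e) 0 := by
  classical
  have negD : IsLUB (Neg.neg '' D) 0 := by
    constructor
    · rintro _ ⟨d, hd, rfl⟩
      exact neg_nonpos.2 (hglb.1 hd)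
    · intro b hb
      have h1 : -b ∈ lowerBounds D := fun d hd => neg_le.1 (hb ⟨d, hd, rfl⟩)
      exact neg_nonpos.1 (hglb.2 h1)
  obtain ⟨C, hCsub, hCc, hClub⟩ := hcsp _ 0 (hne.image _) negD
  have hCne : C.Nonempty := by
    rcases C.eq_empty_or_nonempty with rfl | h
    · exfalso
      have h0 : ∀ y : X, (0:X) ≤ y := fun y => hClub.2 (by rintro z ⟨⟩)
      obtain ⟨v, hv⟩ := hnt
      exact hv (le_antisymm (neg_nonneg.1 (h0 (-v))) (h0 v))
    · exact h
  obtain ⟨h, hh⟩ := hCc.exists_eq_range hCne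
  have hhD : ∀ j, -h j ∈ D := by
    intro j
    have hmem : h j ∈ Neg.neg '' D := hCsub (by rw [hh]; exact ⟨j, rfl⟩)
    obtain ⟨d, hd, hdj⟩ := hmem
    rw [← hdj, neg_neg]
    exact hd
  have step : ∀ (p : {v // v ∈ D}) (j : ℕ), ∃ q : {v // v ∈ D}, q.1 ≤ p.1 ∧ q.1 ≤ -h j := by
    intro p j
    obtain ⟨c, hc, h1, h2⟩ := hdir p.1 p.2 (-h j) (hhD j)
    exact ⟨⟨c, hc⟩, h1, h2⟩
  choose st h1 h2 using step
  let E : ℕ → {v // v ∈ D} := fun j =>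
    Nat.rec ⟨-h 0, hhD 0⟩ (fun j Ej => st Ej (j+1)) j
  have hEsucc : ∀ j, (E (j+1)).1 ≤ (E j).1 := fun j => h1 (E j) (j+1)
  have hEh : ∀ j, (E j).1 ≤ -h j := by
    intro j
    cases j with
    | zero => exact le_rfl
    | succ k => exact h2 (E k) (k+1)
  refine ⟨fun j => (E j).1, fun j => (E j).2, antitone_nat_of_succ_le hEsucc, ?_, ?_⟩
  · rintro _ ⟨j, rfl⟩
    exact hglb.1 (E j).2
  · intro b hb
    have hub : -b ∈ upperBounds C := by
      rw [hh]
      rintro _ ⟨j, rfl⟩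
      exact le_neg.1 ((hb ⟨j, rfl⟩).trans (hEh j))
    exact neg_nonneg.1 (hClub.2 hub)

end

/-- if `X` has a countable order basis and the countable sup property,
then every uo-null net has a uo-null "subsequence" along an increasing sequence of
indices. -/
theorem stmt16 (hArch : VLArchimedean X)
    (hbasis : ∃ A : Set X, CountableOrderBasis A) (hcsp : CountableSupProperty X)
    {ι : Type*} [Preorder ι] [IsDirected ι (· ≤ ·)] [Nonempty ι]
    (x : ι → X) (hx : UoNull x) :
    ∃ α : ℕ → ι, Monotone α ∧ UoNull fun n => x (α n) := by
  classical
  by_cases htriv : ∀ v : X, v = 0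
  · refine ⟨fun _ => Classical.arbitrary ι, monotone_const, fun u hu => ?_⟩
    refine ⟨{0}, ⟨0, rfl⟩, ?_, isGLB_singleton, ?_⟩
    · intro a ha b hb
      exact ⟨0, rfl, by rw [Set.mem_singleton_iff] at ha; rw [ha],
        by rw [Set.mem_singleton_iff] at hb; rw [hb]⟩
    · intro d hd
      rw [Set.mem_singleton_iff] at hd
      subst hd
      exact ⟨0, fun β _ => le_of_eq (htriv _)⟩
  · push_neg at htriv
    obtain ⟨A, hA⟩ := hbasis
    obtain ⟨g, hg0, hglub⟩ := basisLUB hA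
    have hm : ∀ m : ℕ, ∃ e : ℕ → X, Antitone e ∧ IsGLB (Set.range e) 0 ∧
        ∀ j, ∃ α₀ : ι, ∀ γ, α₀ ≤ γ → |x γ| ⊓ g m ≤ e j := by
      intro m
      obtain ⟨D, hne, hdir, hglb, hdom⟩ := hx (g m) (hg0 m)
      obtain ⟨e, heD, hanti, heglb⟩ := seq_of_glb hcsp htriv hne hdir hglb
      refine ⟨e, hanti, heglb, fun j => ?_⟩
      obtain ⟨α₀, hα₀⟩ := hdom _ (heD j)
      refine ⟨α₀, fun γ hγ => ?_⟩
      have h1 : |(|x γ| ⊓ g m)| ≤ e j := hα₀ γ hγ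
      rwa [abs_of_nonneg (le_inf (abs_nonneg _) (hg0 m))] at h1
    choose E hEanti hEglb hEdom using hm
    choose β hβ using hEdom
    have step : ∀ (a : ι) (n : ℕ), ∃ b : ι, a ≤ b ∧ ∀ m, m ≤ n → β m n ≤ b := by
      intro a n
      obtain ⟨M, hM⟩ := (insert a ((Finset.range (n+1)).image fun m => β m n)).exists_le
      refine ⟨M, hM a (Finset.mem_insert_self _ _), fun m hm' => ?_⟩
      exact hM _ (Finset.mem_insert_of_mem (Finset.mem_image.2 ⟨m, Finset.mem_range.2 (by omega), rfl⟩))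
    choose st hst1 hst2 using step
    let α : ℕ → ι := fun n =>
      Nat.rec (st (Classical.arbitrary ι) 0) (fun k αk => st αk (k+1)) n
    have hαmono : Monotone α := monotone_nat_of_le_succ fun n => hst1 (α n) (n+1)
    have hα : ∀ n m, m ≤ n → |x (α n)| ⊓ g m ≤ E m n := by
      intro n m hmn
      refine hβ m n (α n) ?_
      cases n with
      | zero => exact hst2 (Classical.arbitrary ι) 0 m hmn
      | succ k => exact hst2 (α k) (k+1) m hmn
    refine ⟨α, hαmono, fun u hu => ?_⟩
    set r : ℕ → X := fun m => u - u ⊓ g m with hrdef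
    have hr0 : ∀ m, 0 ≤ r m := fun m => sub_nonneg.2 inf_le_left
    have hrglb : IsGLB (Set.range r) 0 := by
      have h1 := hglub u
      rw [abs_of_nonneg hu] at h1
      constructor
      · rintro _ ⟨m, rfl⟩
        exact sub_nonneg.2 inf_le_left
      · intro b hb
        have h2 : u ≤ u - b := by
          refine h1.2 ?_
          rintro _ ⟨m, rfl⟩
          exact le_sub_comm.1 (hb ⟨m, rfl⟩)
        have h3 : b ≤ u - u := le_sub_comm.1 h2
        rwa [sub_self] at h3
    have key : ∀ (a : X) (m : ℕ), a ⊓ u ≤ (a ⊓ g m) + r m := by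
      intro a m
      have h1 : a ⊓ u + u ⊓ g m - u ≤ a ⊓ g m := by
        refine le_inf ?_ ?_
        · rw [sub_le_iff_le_add]
          exact add_le_add inf_le_left inf_le_left
        · rw [sub_le_iff_le_add]
          calc a ⊓ u + u ⊓ g m ≤ u + g m := add_le_add inf_le_right inf_le_right
            _ = g m + u := add_comm _ _
      calc a ⊓ u = (a ⊓ u + u ⊓ g m - u) + (u - u ⊓ g m) := by abel
        _ ≤ a ⊓ g m + r m := add_le_add h1 le_rfl
    set F : ℕ × ℕ → X := fun p => E p.1 p.2 + r p.1 with hFdef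
    refine ⟨{t | ∃ s : Finset (ℕ × ℕ), ∃ hs : s.Nonempty, t = s.inf' hs F},
      ⟨F (0,0), {(0,0)}, ⟨(0,0), Finset.mem_singleton_self _⟩, (Finset.inf'_singleton F).symm⟩,
      ?_, ?_, ?_⟩
    · rintro a ⟨s, hs, rfl⟩ b ⟨s', hs', rfl⟩
      refine ⟨(s ∪ s').inf' (hs.mono Finset.subset_union_left) F,
        ⟨s ∪ s', hs.mono Finset.subset_union_left, rfl⟩, ?_, ?_⟩
      · exact Finset.le_inf' _ _ fun p hp => Finset.inf'_le F (Finset.mem_union_left _ hp)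
      · exact Finset.le_inf' _ _ fun p hp => Finset.inf'_le F (Finset.mem_union_right _ hp)
    · constructor
      · rintro _ ⟨s, hs, rfl⟩
        refine Finset.le_inf' _ _ fun p hp => ?_
        have hE0 : 0 ≤ E p.1 p.2 := (hEglb p.1).1 ⟨p.2, rfl⟩
        exact add_nonneg hE0 (hr0 p.1)
      · intro b hb
        have h5 : ∀ m, b ≤ r m := by
          intro m
          have h6 : b - r m ≤ 0 := by
            refine (hEglb m).2 ?_
            rintro _ ⟨j, rfl⟩
            have h7 : b ≤ E m j + r m :=
              hb ⟨{(m, j)}, ⟨(m, j), Finset.mem_singleton_self _⟩,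
                (Finset.inf'_singleton F (b := (m, j))).symm⟩
            exact sub_le_iff_le_add.2 h7
          exact sub_nonpos.1 h6
        refine hrglb.2 ?_
        rintro _ ⟨m, rfl⟩
        exact h5 m
    · rintro d ⟨s, hs, rfl⟩
      refine ⟨s.sup' hs fun p => p.1 ⊔ p.2, fun n hn => ?_⟩
      refine Finset.le_inf' _ _ fun p hp => ?_
      have hm1 : p.1 ≤ n :=
        le_trans (le_trans le_sup_left (Finset.le_sup' (fun p => p.1 ⊔ p.2) hp)) hn
      have hj1 : p.2 ≤ n :=
        le_trans (le_trans le_sup_right (Finset.le_sup' (fun p => p.1 ⊔ p.2) hp)) hn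
      have h9 : |(|x (α n)| ⊓ u)| = |x (α n)| ⊓ u := abs_of_nonneg (le_inf (abs_nonneg _) hu)
      show |(|x (α n)| ⊓ u)| ≤ F p
      rw [h9]
      calc |x (α n)| ⊓ u ≤ (|x (α n)| ⊓ g p.1) + r p.1 := key _ p.1
        _ ≤ E p.1 p.2 + r p.1 :=
          add_le_add ((hα n p.1 hm1).trans (hEanti p.1 hj1)) le_rfl
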